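/- For a ∈ ℝ, a ≠ 0, the Lie algebra (ℝ^8, μ_a) with bracket μ_a(e_1,e_j) = e_{j+1} for j = 2,…,7, μ_a(e_2,e_3) = a e_7, μ_a(e_2,e_4) = a e_8 is isomorphic to (ℝ^8, μ_1), via the diagonal linear map diag(1, 1/a, 1/a, 1/a, 1/a, 1/a, 1/a, 1/a). -/

import Mathlib

noncomputable section

def e (k : ℕ) : Fin 8 → ℝ := fun m => if (m : ℕ) = k then 1 else 0

/-- Structure constants of `μ_a` (class `A₄`) for `i < j` (0-based indices):
`μ_a(e₁,e_j) = e_{j+1}` for `j = 2,…,7`, `μ_a(e₂,e₃) = a e₇`, `μ_a(e₂,e₄) = a e₈`. -/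
def cplus (a : ℝ) (i j : ℕ) : Fin 8 → ℝ :=
  if i = 0 ∧ 1 ≤ j ∧ j ≤ 6 then e (j + 1)
  else if i = 1 ∧ j = 2 then a • e 6
  else if i = 1 ∧ j = 3 then a • e 7
  else 0

def cst (a : ℝ) (i j : ℕ) : Fin 8 → ℝ :=
  if i < j then cplus a i j else if j < i then -cplus a j i else 0

def mu (a : ℝ) (x y : Fin 8 → ℝ) : Fin 8 → ℝ :=
  fun k => ∑ i : Fin 8, ∑ j : Fin 8, x i * y j * cst a (i : ℕ) (j : ℕ) k

/-- The diagonal map `g_a = diag(1, 1/a, 1/a, 1/a, 1/a, 1/a, 1/a, 1/a)`. -/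
def gmap (a : ℝ) (x : Fin 8 → ℝ) : Fin 8 → ℝ :=
  fun k => if (k : ℕ) = 0 then x k else (1 / a) * x k


lemma finv0 : ((0:Fin 8):ℕ) = 0 := rfl
lemma finv1 : ((1:Fin 8):ℕ) = 1 := rfl
lemma finv2 : ((2:Fin 8):ℕ) = 2 := rfl
lemma finv3 : ((3:Fin 8):ℕ) = 3 := rfl
lemma finv4 : ((4:Fin 8):ℕ) = 4 := rfl
lemma finv5 : ((5:Fin 8):ℕ) = 5 := rfl
lemma finv6 : ((6:Fin 8):ℕ) = 6 := rfl
lemma finv7 : ((7:Fin 8):ℕ) = 7 := rfl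

set_option maxHeartbeats 1000000 in
lemma mu_eq (a : ℝ) (x y : Fin 8 → ℝ) (k : Fin 8) : mu a x y k =
    (x 0 * y 1 - x 1 * y 0) * e 2 k + (x 0 * y 2 - x 2 * y 0) * e 3 k +
    (x 0 * y 3 - x 3 * y 0) * e 4 k + (x 0 * y 4 - x 4 * y 0) * e 5 k +
    ((x 0 * y 5 - x 5 * y 0) + a * (x 1 * y 2 - x 2 * y 1)) * e 6 k +
    ((x 0 * y 6 - x 6 * y 0) + a * (x 1 * y 3 - x 3 * y 1)) * e 7 k := by
  norm_num (config := { decide := true }) [mu, Fin.sum_univ_eight, cst, cplus,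
    finv0, finv1, finv2, finv3, finv4, finv5, finv6, finv7]
  ring

lemma e_zero (j : ℕ) (k : Fin 8) (hj : j ≠ 0) (hk : (k : ℕ) = 0) : e j k = 0 := by
  simp [e, hk, Ne.symm hj]

set_option maxHeartbeats 1000000 in
/-- For `a ≠ 0`, `(ℝ⁸, μ_a)` is isomorphic to `(ℝ⁸, μ₁)` via `diag(1, 1/a, …, 1/a)`. -/
theorem stmt10 (a : ℝ) (ha : a ≠ 0) :
    Function.Bijective (gmap a) ∧
    ∀ x y : Fin 8 → ℝ, gmap a (mu 1 x y) = mu a (gmap a x) (gmap a y) := by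
  constructor
  · constructor
    · intro x y h
      funext k
      have hk := congrFun h k
      simp only [gmap] at hk
      split at hk
      · exact hk
      · exact mul_left_cancel₀ (by simp [ha]) hk
    · intro y
      refine ⟨fun k => if (k : ℕ) = 0 then y k else a * y k, ?_⟩
      funext k
      simp only [gmap]
      split
      · rfl
      · next h => field_simp [if_neg h]
  · intro x y
    funext k
    simp only [gmap, mu_eq]
    by_cases hk : (k : ℕ) = 0
    · simp [e, gmap, hk]
    · simp only [if_neg hk, gmap, finv0, finv1, finv2, finv3, finv4, finv5, finv6, finv7]
      norm_num
      field_simp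

end
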